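/- arXiv:2509.11828 — 3 statements merged into one kernel-verified Lean document; each statement's English description precedes it below -/
import Mathlib

section
/- Let n ≥ 1, μ ∈ ℝ, 0 < a < n, 0 < b < 1, and 1 < p < q < ∞. Suppose there is a finite constant B such that for every nonnegative measurable f ∈ L^p(ℝ^{2n+1}) one has ‖S_{ab}f‖_{L^q(ℝ^{2n+1})} ≤ B ‖f‖_{L^p(ℝ^{2n+1})}, where S_{ab}f(u,v,t) = ∭_{ℝ^{2n+1}} f(ξ,η,τ) Ω^{ab}[(u,v,t)⊙(ξ,η,τ)^{-1}] dξ dη dτ. Then necessarily b ≤ 1/p − 1/q, and together with the necessary homogeneity condition (a+b)/(n+1) = 1/p − 1/q this forces a ≥ n·b. -/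
open MeasureTheory Real
open scoped RealInnerProductSpace ENNReal

noncomputable section

/-- Euclidean space ℝⁿ. -/
abbrev En (n : ℕ) := EuclideanSpace ℝ (Fin n)

/-- The kernel `Ω^{ab}(ξ,η,τ) = (|ξ|²+|η|²)^{-(n-a)} (|ξ|²+|η|²+|τ|)^{-(1-b)}`. -/
noncomputable def Omker (n : ℕ) (a b : ℝ) (ξ η : En n) (τ : ℝ) : ℝ :=
  (‖ξ‖ ^ 2 + ‖η‖ ^ 2) ^ (-(n - a)) * (‖ξ‖ ^ 2 + ‖η‖ ^ 2 + |τ|) ^ (-(1 - b))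

/-- The fractional integral operator `S_{ab}` on the Heisenberg-type group with
parameter `μ`:  the kernel is evaluated at `(u,v,t) ⊙ (ξ,η,τ)⁻¹
  = (u-ξ, v-η, t-τ-μ(u·η - v·ξ))`. -/
noncomputable def Sop (n : ℕ) (μ a b : ℝ) (f : En n × En n × ℝ → ℝ)
    (x : En n × En n × ℝ) : ℝ :=
  ∫ y : En n × En n × ℝ,
    f y * Omker n a b (x.1 - y.1) (x.2.1 - y.2.1)
      (x.2.2 - y.2.2 - μ * (⟪x.1, y.2.1⟫ - ⟪x.2.1, y.1⟫))

lemma aux_exp_le {α C : ℝ} (h : ∀ R : ℝ, 1 ≤ R → R ^ α ≤ C) : α ≤ 0 := by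
  by_contra hα
  push_neg at hα
  obtain ⟨R, hRC, hR1⟩ :=
    (((tendsto_rpow_atTop hα).eventually_gt_atTop C).and
      (Filter.eventually_ge_atTop 1)).exists
  exact absurd (h R hR1) (not_le.mpr hRC)

lemma aux_main {b p q c1 K V B' : ℝ} (hc1 : 0 < c1) (hK : 0 < K)
    (hV : 0 < V)
    (h : ∀ R : ℝ, 1 ≤ R →
      c1 * (K * R) ^ (b - 1) * (V * (V * (2 * R))) * (V * (V * (2 * R))) ^ (1 / q)
        ≤ B' * (V * (V * (2 * R))) ^ (1 / p)) :
    b + 1 / q ≤ 1 / p := by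
  set E : ℝ := 2 * V ^ 2 with hE
  have hE0 : 0 < E := by positivity
  set C1 : ℝ := c1 * K ^ (b - 1) * (E * E ^ (1 / q)) with hC1
  have hC10 : 0 < C1 := by positivity
  set C2 : ℝ := B' * E ^ (1 / p) with hC2
  have key : ∀ R : ℝ, 1 ≤ R → R ^ (b + 1 / q - 1 / p) ≤ C2 / C1 := by
    intro R hR
    have hR0 : 0 < R := one_pos.trans_le hR
    have h' := h R hR
    rw [show V * (V * (2 * R)) = E * R by rw [hE]; ring] at h'
    rw [Real.mul_rpow hK.le hR0.le, Real.mul_rpow hE0.le hR0.le,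
      Real.mul_rpow hE0.le hR0.le] at h'
    have e1 : c1 * (K ^ (b - 1) * R ^ (b - 1)) * (E * R) * (E ^ (1 / q) * R ^ (1 / q))
        = C1 * (R ^ (b - 1) * R ^ (1 : ℝ) * R ^ (1 / q)) := by
      rw [Real.rpow_one, hC1]; ring
    have e2 : R ^ (b - 1) * R ^ (1 : ℝ) * R ^ (1 / q)
        = R ^ (b + 1 / q - 1 / p) * R ^ (1 / p) := by
      rw [← Real.rpow_add hR0, ← Real.rpow_add hR0, ← Real.rpow_add hR0]
      ring_nf
    rw [e1, e2] at h'
    have h'' : C1 * R ^ (b + 1 / q - 1 / p) ≤ C2 := by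
      have hRp : 0 < R ^ (1 / p) := Real.rpow_pos_of_pos hR0 _
      have : C1 * R ^ (b + 1 / q - 1 / p) * R ^ (1 / p) ≤ C2 * R ^ (1 / p) := by
        calc C1 * R ^ (b + 1 / q - 1 / p) * R ^ (1 / p)
            = C1 * (R ^ (b + 1 / q - 1 / p) * R ^ (1 / p)) := by ring
          _ ≤ B' * (E ^ (1 / p) * R ^ (1 / p)) := h'
          _ = C2 * R ^ (1 / p) := by rw [hC2]; ring
      exact le_of_mul_le_mul_right this hRp
    rw [← le_div_iff₀' hC10] at h''
    exact h''
  have := aux_exp_le key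
  linarith


lemma aux_final (n : ℕ) (a b p q : ℝ) (hp0 : 0 < p) (hq0 : 0 < q)
    (h1 : b + 1 / q ≤ 1 / p) :
    b ≤ 1 / p - 1 / q ∧ ((a + b) / (n + 1) = 1 / p - 1 / q → n * b ≤ a) := by
  have hb : b ≤ 1 / p - 1 / q := by linarith
  refine ⟨hb, fun heq => ?_⟩
  have hn1 : (0:ℝ) < (n:ℝ) + 1 := by positivity
  have heq' : a + b = ((n:ℝ) + 1) * (1 / p - 1 / q) := by
    rw [div_eq_iff hn1.ne'] at heq
    linarith
  have h2 : ((n:ℝ) + 1) * b ≤ ((n:ℝ) + 1) * (1 / p - 1 / q) :=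
    mul_le_mul_of_nonneg_left hb hn1.le
  have h3 : ((n:ℝ) + 1) * b = (n:ℝ) * b + b := by ring
  linarith

set_option maxHeartbeats 8000000 in
theorem stmt4 (n : ℕ) (hn : 1 ≤ n) (μ a b p q B : ℝ)
    (ha0 : 0 < a) (han : a < n) (hb0 : 0 < b) (hb1 : b < 1)
    (hp : 1 < p) (hpq : p < q)
    (hB : ∀ f : En n × En n × ℝ → ℝ,
      Measurable f → (∀ x, 0 ≤ f x) →
      MemLp f (ENNReal.ofReal p) volume →
      eLpNorm (Sop n μ a b f) (ENNReal.ofReal q) volume ≤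
        ENNReal.ofReal B * eLpNorm f (ENNReal.ofReal p) volume) :
    b ≤ 1 / p - 1 / q ∧ ((a + b) / (n + 1) = 1 / p - 1 / q → n * b ≤ a) := by
  have hq1 : 1 < q := hp.trans hpq
  have hp0 : 0 < p := lt_trans one_pos hp
  have hq0 : 0 < q := lt_trans one_pos hq1
  have hna : (0:ℝ) < (n:ℝ) - a := by
    have : a < (n:ℝ) := han
    linarith
  -- constants
  set VB := volume (Metric.closedBall (0 : En n) 1) with hVB
  have hVBpos : 0 < VB := Metric.measure_closedBall_pos _ _ one_pos
  have hVBlt : VB < ⊤ := measure_closedBall_lt_top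
  set V := VB.toReal with hVdef
  have hV0 : 0 < V := ENNReal.toReal_pos hVBpos.ne' hVBlt.ne
  set K : ℝ := 31 + 5 * |μ| with hKdef
  have hK0 : 0 < K := by positivity
  set c1 : ℝ := (29 : ℝ) ^ (a - (n : ℝ)) with hc1def
  have hc10 : 0 < c1 := Real.rpow_pos_of_pos (by norm_num) _
  set B' : ℝ := max B 0 with hB'def
  have hB'0 : 0 ≤ B' := le_max_right _ _
  -- exponent facts
  have hq' : (ENNReal.ofReal q) ≠ 0 := by
    simp only [ne_eq, ENNReal.ofReal_eq_zero, not_le]; exact hq0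
  have hqt : (ENNReal.ofReal q) ≠ ⊤ := ENNReal.ofReal_ne_top
  have hp' : (ENNReal.ofReal p) ≠ 0 := by
    simp only [ne_eq, ENNReal.ofReal_eq_zero, not_le]; exact hp0
  have hpt : (ENNReal.ofReal p) ≠ ⊤ := ENNReal.ofReal_ne_top
  -- the center of the shifted ball
  set w : En n := (3 : ℝ) • EuclideanSpace.single (⟨0, hn⟩ : Fin n) (1 : ℝ) with hwdef
  have hwnorm : ‖w‖ = 3 := by
    rw [hwdef, norm_smul, EuclideanSpace.norm_single]
    norm_num
  have KEY : ∀ R : ℝ, 1 ≤ R →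
      c1 * (K * R) ^ (b - 1) * (V * (V * (2 * R))) * (V * (V * (2 * R))) ^ (1 / q)
        ≤ B' * (V * (V * (2 * R))) ^ (1 / p) := by
    intro R hR
    have hR0 : 0 < R := one_pos.trans_le hR
    set A : Set (En n × En n × ℝ) :=
      Metric.closedBall 0 1 ×ˢ Metric.closedBall 0 1 ×ˢ Set.Icc (-R) R with hAdef
    set X : Set (En n × En n × ℝ) :=
      Metric.closedBall w 1 ×ˢ Metric.closedBall 0 1 ×ˢ Set.Icc (-R) R with hXdef
    have hA : MeasurableSet A :=
      measurableSet_closedBall.prod (measurableSet_closedBall.prod measurableSet_Icc)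
    have hX : MeasurableSet X :=
      measurableSet_closedBall.prod (measurableSet_closedBall.prod measurableSet_Icc)
    have volA : volume A = VB * (VB * ENNReal.ofReal (2 * R)) := by
      rw [hAdef, Measure.volume_eq_prod, Measure.prod_prod, Measure.volume_eq_prod,
        Measure.prod_prod, Real.volume_Icc]
      ring_nf
      rw [hVB]
      ring
    have volX : volume X = VB * (VB * ENNReal.ofReal (2 * R)) := by
      rw [hXdef, Measure.volume_eq_prod, Measure.prod_prod, Measure.volume_eq_prod,
        Measure.prod_prod, Real.volume_Icc, Measure.addHaar_closedBall_center]
      ring_nf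
      rw [hVB]
      ring
    have volAne : volume A ≠ ⊤ := by
      rw [volA]
      exact ENNReal.mul_ne_top hVBlt.ne (ENNReal.mul_ne_top hVBlt.ne ENNReal.ofReal_ne_top)
    have volAtoReal : (volume A).toReal = V * (V * (2 * R)) := by
      rw [volA, ENNReal.toReal_mul, ENNReal.toReal_mul, ENNReal.toReal_ofReal (by linarith)]
    have volXtoReal : (volume X).toReal = V * (V * (2 * R)) := by
      rw [volX, ENNReal.toReal_mul, ENNReal.toReal_mul, ENNReal.toReal_ofReal (by linarith)]
    -- the test function
    set f : En n × En n × ℝ → ℝ := A.indicator (fun _ => (1 : ℝ)) with hfdef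
    have hfmeas : Measurable f := measurable_const.indicator hA
    have hfnn : ∀ z, 0 ≤ f z := fun z => Set.indicator_nonneg (fun _ _ => zero_le_one) z
    have hfmem : MemLp f (ENNReal.ofReal p) volume :=
      memLp_indicator_const _ hA 1 (Or.inr volAne)
    -- pointwise kernel estimates
    have est : ∀ x ∈ X, ∀ y ∈ A,
        c1 * (K * R) ^ (b - 1) ≤
          Omker n a b (x.1 - y.1) (x.2.1 - y.2.1)
            (x.2.2 - y.2.2 - μ * (⟪x.1, y.2.1⟫ - ⟪x.2.1, y.1⟫)) ∧
        Omker n a b (x.1 - y.1) (x.2.1 - y.2.1)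
            (x.2.2 - y.2.2 - μ * (⟪x.1, y.2.1⟫ - ⟪x.2.1, y.1⟫)) ≤ 1 := by
      intro x hx y hy
      obtain ⟨hx1, hx2, hx3⟩ : x.1 ∈ Metric.closedBall w 1 ∧
          x.2.1 ∈ Metric.closedBall (0 : En n) 1 ∧ x.2.2 ∈ Set.Icc (-R) R := by
        simpa [hXdef, Set.mem_prod] using hx
      obtain ⟨hy1, hy2, hy3⟩ : y.1 ∈ Metric.closedBall (0 : En n) 1 ∧
          y.2.1 ∈ Metric.closedBall (0 : En n) 1 ∧ y.2.2 ∈ Set.Icc (-R) R := by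
        simpa [hAdef, Set.mem_prod] using hy
      rw [Metric.mem_closedBall, dist_eq_norm] at hx1 hx2 hy1 hy2
      rw [sub_zero] at hx2 hy1 hy2
      rw [Set.mem_Icc, ← abs_le] at hx3 hy3
      -- norm bounds
      have hxu2 : 2 ≤ ‖x.1‖ := by
        have h := abs_norm_sub_norm_le x.1 w
        rw [abs_le] at h
        linarith [hwnorm ▸ h.1, hwnorm ▸ h.2]
      have hxu4 : ‖x.1‖ ≤ 4 := by
        have h := norm_le_norm_add_norm_sub' x.1 w
        rw [hwnorm] at h
        linarith
      have hd1 : 1 ≤ ‖x.1 - y.1‖ := by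
        have h := norm_sub_norm_le x.1 y.1
        linarith
      have hd5 : ‖x.1 - y.1‖ ≤ 5 := by
        have h := norm_sub_le x.1 y.1
        linarith
      have hd2 : ‖x.2.1 - y.2.1‖ ≤ 2 := by
        have h := norm_sub_le x.2.1 y.2.1
        linarith
      set s : ℝ := ‖x.1 - y.1‖ ^ 2 + ‖x.2.1 - y.2.1‖ ^ 2 with hsdef
      have hs1 : 1 ≤ s := by
        have h1 : 1 ≤ ‖x.1 - y.1‖ ^ 2 := by nlinarith
        have h2 : 0 ≤ ‖x.2.1 - y.2.1‖ ^ 2 := sq_nonneg _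
        linarith
      have hs29 : s ≤ 29 := by nlinarith [norm_nonneg (x.1 - y.1), norm_nonneg (x.2.1 - y.2.1)]
      set τ' : ℝ := x.2.2 - y.2.2 - μ * (⟪x.1, y.2.1⟫ - ⟪x.2.1, y.1⟫) with hτdef
      have hτ : |τ'| ≤ 2 * R + 5 * |μ| := by
        have hz : |⟪x.1, y.2.1⟫ - ⟪x.2.1, y.1⟫| ≤ 5 := by
          have h1 := abs_real_inner_le_norm x.1 y.2.1
          have h2 := abs_real_inner_le_norm x.2.1 y.1
          have := abs_sub (⟪x.1, y.2.1⟫ : ℝ) (⟪x.2.1, y.1⟫ : ℝ)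
          nlinarith [norm_nonneg x.1, norm_nonneg y.2.1, norm_nonneg x.2.1, norm_nonneg y.1,
            abs_nonneg (⟪x.1, y.2.1⟫ : ℝ), abs_nonneg (⟪x.2.1, y.1⟫ : ℝ)]
        calc |τ'| ≤ |x.2.2 - y.2.2| + |μ * (⟪x.1, y.2.1⟫ - ⟪x.2.1, y.1⟫)| := abs_sub _ _
          _ ≤ (|x.2.2| + |y.2.2|) + |μ| * |⟪x.1, y.2.1⟫ - ⟪x.2.1, y.1⟫| := by
              rw [abs_mul]; gcongr; exact abs_sub _ _
          _ ≤ 2 * R + 5 * |μ| := by nlinarith [abs_nonneg μ]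
      have harg : s + |τ'| ≤ K * R := by
        rw [hKdef]
        nlinarith [abs_nonneg μ]
      have hargpos : 0 < s + |τ'| := by positivity
      constructor
      · -- lower bound
        rw [Omker]
        have h1 : c1 ≤ s ^ (-(( n : ℝ) - a)) := by
          rw [hc1def, show a - (n:ℝ) = -((n:ℝ) - a) by ring]
          exact Real.rpow_le_rpow_of_nonpos (by linarith) hs29 (by linarith)
        have h2 : (K * R) ^ (b - 1) ≤ (s + |τ'|) ^ (-(1 - b)) := by
          rw [show -(1 - b) = b - 1 by ring]
          exact Real.rpow_le_rpow_of_nonpos hargpos harg (by linarith)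
        have h3 : 0 ≤ (K * R) ^ (b - 1) := Real.rpow_nonneg (by positivity) _
        have h4 : 0 ≤ s ^ (-((n : ℝ) - a)) := Real.rpow_nonneg (by linarith) _
        exact mul_le_mul h1 h2 h3 h4
      · -- upper bound
        rw [Omker]
        have h1 : s ^ (-((n : ℝ) - a)) ≤ 1 :=
          Real.rpow_le_one_of_one_le_of_nonpos hs1 (by linarith)
        have h2 : (s + |τ'|) ^ (-(1 - b)) ≤ 1 :=
          Real.rpow_le_one_of_one_le_of_nonpos (by linarith [abs_nonneg τ']) (by linarith)
        have h3 : 0 ≤ (s + |τ'|) ^ (-(1 - b)) := Real.rpow_nonneg (by positivity) _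
        nlinarith [Real.rpow_nonneg (show (0:ℝ) ≤ s by linarith) (-((n : ℝ) - a))]
    -- kernel nonnegativity
    have hker_nn : ∀ x y : En n × En n × ℝ,
        0 ≤ Omker n a b (x.1 - y.1) (x.2.1 - y.2.1)
          (x.2.2 - y.2.2 - μ * (⟪x.1, y.2.1⟫ - ⟪x.2.1, y.1⟫)) := by
      intro x y
      rw [Omker]
      have h1 : (0:ℝ) ≤ ‖x.1 - y.1‖ ^ 2 + ‖x.2.1 - y.2.1‖ ^ 2 := by positivity
      exact mul_nonneg (Real.rpow_nonneg h1 _) (Real.rpow_nonneg (by positivity) _)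
    -- measurability of the kernel
    have hgmeas : ∀ x : En n × En n × ℝ, Measurable fun y : En n × En n × ℝ =>
        Omker n a b (x.1 - y.1) (x.2.1 - y.2.1)
          (x.2.2 - y.2.2 - μ * (⟪x.1, y.2.1⟫ - ⟪x.2.1, y.1⟫)) := by
      intro x
      unfold Omker
      have h1 : Measurable fun y : En n × En n × ℝ =>
          ‖x.1 - y.1‖ ^ 2 + ‖x.2.1 - y.2.1‖ ^ 2 := by fun_prop
      have h2 : Measurable fun y : En n × En n × ℝ =>
          x.2.2 - y.2.2 - μ * (⟪x.1, y.2.1⟫ - ⟪x.2.1, y.1⟫) := by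
        apply Measurable.sub (by fun_prop)
        apply Measurable.const_mul
        exact ((Continuous.inner continuous_const (continuous_snd.fst)).sub
          (Continuous.inner continuous_const (continuous_fst))).measurable
      exact (h1.pow_const _).mul ((h1.add h2.abs).pow_const _)
    -- lower bound for Sop f on X
    have hSop : ∀ x ∈ X, c1 * (K * R) ^ (b - 1) * (volume A).toReal ≤ Sop n μ a b f x := by
      intro x hx
      have hint : IntegrableOn (fun y : En n × En n × ℝ =>
          Omker n a b (x.1 - y.1) (x.2.1 - y.2.1)
            (x.2.2 - y.2.2 - μ * (⟪x.1, y.2.1⟫ - ⟪x.2.1, y.1⟫))) A volume := by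
        apply Measure.integrableOn_of_bounded volAne (hgmeas x).aestronglyMeasurable (M := 1)
        refine (ae_restrict_iff' hA).mpr (Filter.Eventually.of_forall fun y hy => ?_)
        rw [Real.norm_eq_abs, abs_of_nonneg (hker_nn x y)]
        exact (est x hx y hy).2
      have hfun : (fun y : En n × En n × ℝ => f y * Omker n a b (x.1 - y.1) (x.2.1 - y.2.1)
            (x.2.2 - y.2.2 - μ * (⟪x.1, y.2.1⟫ - ⟪x.2.1, y.1⟫)))
          = A.indicator (fun y : En n × En n × ℝ => Omker n a b (x.1 - y.1) (x.2.1 - y.2.1)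
            (x.2.2 - y.2.2 - μ * (⟪x.1, y.2.1⟫ - ⟪x.2.1, y.1⟫))) := by
        funext y
        by_cases hy : y ∈ A
        · rw [Set.indicator_of_mem hy, hfdef, Set.indicator_of_mem hy, one_mul]
        · rw [Set.indicator_of_notMem hy, hfdef, Set.indicator_of_notMem hy, zero_mul]
      have heq : Sop n μ a b f x = ∫ y in A,
          Omker n a b (x.1 - y.1) (x.2.1 - y.2.1)
            (x.2.2 - y.2.2 - μ * (⟪x.1, y.2.1⟫ - ⟪x.2.1, y.1⟫)) := by
        rw [Sop, hfun, integral_indicator hA]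
      rw [heq]
      have := setIntegral_ge_of_const_le_real hA volAne (fun y hy => (est x hx y hy).1) hint
      rw [measureReal_def] at this
      exact this
    -- eLpNorm comparison
    set m : ℝ := c1 * (K * R) ^ (b - 1) * (volume A).toReal with hmdef
    have hm0 : 0 ≤ m := by
      apply mul_nonneg (mul_nonneg hc10.le (Real.rpow_nonneg (by positivity) _))
      exact ENNReal.toReal_nonneg
    have hmono : eLpNorm (X.indicator fun _ => m) (ENNReal.ofReal q) volume ≤
        eLpNorm (Sop n μ a b f) (ENNReal.ofReal q) volume := by
      apply eLpNorm_mono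
      intro x
      by_cases hx : x ∈ X
      · rw [Set.indicator_of_mem hx, Real.norm_eq_abs, Real.norm_eq_abs, abs_of_nonneg hm0]
        exact le_trans (hSop x hx) (le_abs_self _)
      · rw [Set.indicator_of_notMem hx]
        simp [abs_nonneg]
    have lhs_eq : eLpNorm (X.indicator fun _ => m) (ENNReal.ofReal q) volume =
        ENNReal.ofReal m * (volume X) ^ (1 / q) := by
      rw [eLpNorm_indicator_const hX hq' hqt, Real.enorm_eq_ofReal hm0,
        ENNReal.toReal_ofReal hq0.le]
    have rhs_eq : eLpNorm f (ENNReal.ofReal p) volume = (volume A) ^ (1 / p) := by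
      rw [hfdef, eLpNorm_indicator_const hA hp' hpt, ENNReal.toReal_ofReal hp0.le]
      simp
    have chain : ENNReal.ofReal m * (volume X) ^ (1 / q) ≤
        ENNReal.ofReal B' * (volume A) ^ (1 / p) := by
      calc ENNReal.ofReal m * (volume X) ^ (1 / q)
          = eLpNorm (X.indicator fun _ => m) (ENNReal.ofReal q) volume := lhs_eq.symm
        _ ≤ eLpNorm (Sop n μ a b f) (ENNReal.ofReal q) volume := hmono
        _ ≤ ENNReal.ofReal B * eLpNorm f (ENNReal.ofReal p) volume := hB f hfmeas hfnn hfmem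
        _ = ENNReal.ofReal B * (volume A) ^ (1 / p) := by rw [rhs_eq]
        _ ≤ ENNReal.ofReal B' * (volume A) ^ (1 / p) := by
            gcongr
            exact le_max_left _ _
    have hrhs_ne : ENNReal.ofReal B' * (volume A) ^ (1 / p) ≠ ⊤ :=
      ENNReal.mul_ne_top ENNReal.ofReal_ne_top
        (ENNReal.rpow_ne_top_of_nonneg (by positivity) volAne)
    have hreal := ENNReal.toReal_mono hrhs_ne chain
    rw [ENNReal.toReal_mul, ENNReal.toReal_mul, ENNReal.toReal_ofReal hm0,
      ENNReal.toReal_ofReal hB'0, ← ENNReal.toReal_rpow, ← ENNReal.toReal_rpow,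
      volXtoReal, volAtoReal] at hreal
    rw [hmdef, volAtoReal] at hreal
    exact hreal
  -- conclude
  exact aux_final n a b p q hp0 hq0 (aux_main hc10 hK0 hV0 KEY)
end
end

section
/- Let n ≥ 1, 0 < a < n, 0 < b < 1 with a ≥ n·b, and let θ satisfy b < θ < 1 − (a−nb)/(n+1). For all ξ, η ∈ ℝⁿ and τ ∈ ℝ with ξ ≠ 0, η ≠ 0, τ ≠ 0 and |ξ||η| ≤ |τ|, one has Ω^{ab}(ξ,η,τ) ≤ |ξ|^{(a+θ−1)−n} |η|^{(a+θ−1)−n} |τ|^{(b−θ+1)−1} ( |ξ||η|/|τ| + |τ|/(|ξ||η|) )^{−(1−θ)} ≤ V^{αβ}(ξ,η,τ) with α = a + θ − 1 and β = b − θ + 1 (so that α + β = a + b). -/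
open MeasureTheory Real
open scoped ENNReal

noncomputable section

/-- The kernel `V^{αβ}(ξ,η,τ)`. -/
noncomputable def Vker (n : ℕ) (α β : ℝ) (ξ η : En n) (τ : ℝ) : ℝ :=
  ‖ξ‖ ^ (α - n) * ‖η‖ ^ (α - n) * |τ| ^ (β - 1) *
    (‖ξ‖ * ‖η‖ / |τ| + |τ| / (‖ξ‖ * ‖η‖)) ^ (-(|α - n * β| / (n + 1)))

theorem stmt6 (n : ℕ) (hn : 1 ≤ n) (a b θ : ℝ)
    (ha0 : 0 < a) (han : a < n) (hb0 : 0 < b) (hb1 : b < 1) (hab : n * b ≤ a)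
    (hθ1 : b < θ) (hθ2 : θ < 1 - (a - n * b) / (n + 1))
    (ξ η : En n) (τ : ℝ) (hξ : ξ ≠ 0) (hη : η ≠ 0) (hτ : τ ≠ 0)
    (hsmall : ‖ξ‖ * ‖η‖ ≤ |τ|) :
    Omker n a b ξ η τ ≤
      ‖ξ‖ ^ ((a + θ - 1) - n) * ‖η‖ ^ ((a + θ - 1) - n) * |τ| ^ ((b - θ + 1) - 1) *
        (‖ξ‖ * ‖η‖ / |τ| + |τ| / (‖ξ‖ * ‖η‖)) ^ (-(1 - θ)) ∧
    ‖ξ‖ ^ ((a + θ - 1) - n) * ‖η‖ ^ ((a + θ - 1) - n) * |τ| ^ ((b - θ + 1) - 1) *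
        (‖ξ‖ * ‖η‖ / |τ| + |τ| / (‖ξ‖ * ‖η‖)) ^ (-(1 - θ)) ≤
      Vker n (a + θ - 1) (b - θ + 1) ξ η τ := by
  have hx : (0:ℝ) < ‖ξ‖ := norm_pos_iff.mpr hξ
  have hy : (0:ℝ) < ‖η‖ := norm_pos_iff.mpr hη
  have ht : (0:ℝ) < |τ| := abs_pos.mpr hτ
  set x : ℝ := ‖ξ‖ with hxdef
  set y : ℝ := ‖η‖ with hydef
  set t : ℝ := |τ| with htdef
  set p : ℝ := x * y with hpdef
  have hp : 0 < p := mul_pos hx hy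
  set S : ℝ := p / t + t / p with hSdef
  have hθlt1 : θ < 1 := by
    have hdiv : 0 ≤ (a - n * b) / ((n:ℝ) + 1) := div_nonneg (by linarith) (by positivity)
    linarith
  have hS1 : (1:ℝ) ≤ S := by
    have h1 : (1:ℝ) ≤ t / p := (one_le_div hp).mpr hsmall
    have h0 : (0:ℝ) ≤ p / t := le_of_lt (div_pos hp ht)
    rw [hSdef]; linarith
  have hS0 : 0 < S := lt_of_lt_of_le one_pos hS1
  have hu2 : 2 * p ≤ x ^ 2 + y ^ 2 := by nlinarith [sq_nonneg (x - y)]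
  have hup : p ≤ x ^ 2 + y ^ 2 := by linarith
  have hu0 : 0 < x ^ 2 + y ^ 2 := lt_of_lt_of_le hp hup
  have hut0 : 0 < x ^ 2 + y ^ 2 + t := by linarith
  have hpS : p * S ≤ x ^ 2 + y ^ 2 + t := by
    have : p * S = p * p / t + t := by
      field_simp [hSdef]
      rw [hSdef]; field_simp
    rw [this]
    have h1 : p * p / t ≤ p := by
      rw [div_le_iff₀ ht]
      nlinarith
    linarith
  constructor
  · -- first inequality
    have e1 : (x ^ 2 + y ^ 2) ^ (-((n:ℝ) - a)) ≤ p ^ (a - n) := by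
      rw [show -((n:ℝ) - a) = a - n by ring]
      exact Real.rpow_le_rpow_of_nonpos hp hup (by linarith)
    have e2 : (x ^ 2 + y ^ 2 + t) ^ (-(1 - b)) =
        (x ^ 2 + y ^ 2 + t) ^ (θ - 1) * (x ^ 2 + y ^ 2 + t) ^ (b - θ) := by
      rw [← Real.rpow_add hut0]; ring_nf
    have e3 : (x ^ 2 + y ^ 2 + t) ^ (θ - 1) ≤ p ^ (θ - 1) * S ^ (θ - 1) := by
      rw [← Real.mul_rpow hp.le hS0.le]
      exact Real.rpow_le_rpow_of_nonpos (mul_pos hp hS0) hpS (by linarith)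
    have e4 : (x ^ 2 + y ^ 2 + t) ^ (b - θ) ≤ t ^ (b - θ) := by
      exact Real.rpow_le_rpow_of_nonpos ht (by linarith) (by linarith)
    have key : Omker n a b ξ η τ ≤ p ^ (a - n) * (p ^ (θ - 1) * S ^ (θ - 1)) * t ^ (b - θ) := by
      rw [Omker, e2]
      calc (x ^ 2 + y ^ 2) ^ (-((n:ℝ) - a)) *
            ((x ^ 2 + y ^ 2 + t) ^ (θ - 1) * (x ^ 2 + y ^ 2 + t) ^ (b - θ))
          ≤ p ^ (a - n) * ((p ^ (θ - 1) * S ^ (θ - 1)) * t ^ (b - θ)) := by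
            apply mul_le_mul e1 ?_ (by positivity) (by positivity)
            exact mul_le_mul e3 e4 (by positivity) (by positivity)
        _ = p ^ (a - n) * (p ^ (θ - 1) * S ^ (θ - 1)) * t ^ (b - θ) := by ring
    calc Omker n a b ξ η τ ≤ p ^ (a - n) * (p ^ (θ - 1) * S ^ (θ - 1)) * t ^ (b - θ) := key
      _ = x ^ ((a + θ - 1) - n) * y ^ ((a + θ - 1) - n) * t ^ ((b - θ + 1) - 1) *
          S ^ (-(1 - θ)) := by
          have hpp : p ^ (a - (n:ℝ)) * p ^ (θ - 1) = p ^ ((a + θ - 1) - (n:ℝ)) := by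
            rw [← Real.rpow_add hp]; ring_nf
          rw [show ((b - θ + 1) - 1 : ℝ) = b - θ by ring,
            show (-(1 - θ) : ℝ) = θ - 1 by ring,
            show p ^ (a - (n:ℝ)) * (p ^ (θ - 1) * S ^ (θ - 1)) * t ^ (b - θ)
              = (p ^ (a - (n:ℝ)) * p ^ (θ - 1)) * t ^ (b - θ) * S ^ (θ - 1) by ring,
            hpp, hpdef, Real.mul_rpow hx.le hy.le]
  · -- second inequality
    rw [Vker]
    have hcast : ((a + θ - 1) - (n:ℝ)) = (a + θ - 1) - n := rfl
    apply mul_le_mul_of_nonneg_left _ (by positivity)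
    apply Real.rpow_le_rpow_of_exponent_le hS1
    have hn1 : (0:ℝ) < (n:ℝ) + 1 := by positivity
    have habs : |a + θ - 1 - (n:ℝ) * (b - θ + 1)| = ((n:ℝ) + 1) * (1 - θ) - (a - n * b) := by
      rw [abs_of_nonpos]
      · ring
      · have h2 : (a - (n:ℝ) * b) / ((n:ℝ) + 1) < 1 - θ := by linarith
        have h3 : a - (n:ℝ) * b < (1 - θ) * ((n:ℝ) + 1) := (div_lt_iff₀ hn1).mp h2
        linarith [h3]
    rw [habs]
    rw [neg_le_neg_iff, div_le_iff₀ hn1]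
    linarith [hab]
end
end

section
/- Let n ≥ 1, 0 < a < n, 0 < b < 1 with a ≥ n·b, and fix any θ with b < θ < 1 − (a−nb)/(n+1). Then for all ξ, η ∈ ℝⁿ and τ ∈ ℝ with ξ ≠ 0, η ≠ 0, τ ≠ 0, the kernel Ω^{ab} satisfies Ω^{ab}(ξ,η,τ) ≤ V^{a,b}(ξ,η,τ) + V^{a+θ−1, b−θ+1}(ξ,η,τ); in particular Ω^{ab} is bounded by a sum of two kernels V^{αβ} with α + β = a + b. -/
open MeasureTheory Real
open scoped ENNReal

noncomputable section

set_option maxHeartbeats 1000000 in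
lemma core_ineq (n : ℕ) (hn : 1 ≤ n) (a b θ : ℝ)
    (ha0 : 0 < a) (han : a < n) (hb0 : 0 < b) (hb1 : b < 1) (hab : n * b ≤ a)
    (hθ1 : b < θ) (hθ2 : θ < 1 - (a - n * b) / (n + 1))
    (s t u : ℝ) (hs : 0 < s) (ht : 0 < t) (hu : 0 < u) :
    (s ^ 2 + t ^ 2) ^ (-((n : ℝ) - a)) * (s ^ 2 + t ^ 2 + u) ^ (-(1 - b)) ≤
      s ^ (a - (n : ℝ)) * t ^ (a - (n : ℝ)) * u ^ (b - 1) *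
        (s * t / u + u / (s * t)) ^ (-(|a - (n : ℝ) * b| / ((n : ℝ) + 1))) +
      s ^ (a + θ - 1 - (n : ℝ)) * t ^ (a + θ - 1 - (n : ℝ)) * u ^ (b - θ + 1 - 1) *
        (s * t / u + u / (s * t)) ^
          (-(|a + θ - 1 - (n : ℝ) * (b - θ + 1)| / ((n : ℝ) + 1))) := by
  set N : ℝ := (n : ℝ) with hNdef
  have hN1 : (1 : ℝ) ≤ N := by rw [hNdef]; exact_mod_cast hn
  set w : ℝ := s * t with hwdef
  have hw : 0 < w := mul_pos hs ht
  have hS : 0 < s ^ 2 + t ^ 2 := by positivity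
  have h2w : 2 * w ≤ s ^ 2 + t ^ 2 := by nlinarith [sq_nonneg (s - t)]
  set g1 : ℝ := (a - N * b) / (N + 1) with hg1def
  have hN1pos : (0 : ℝ) < N + 1 := by linarith
  have hg1 : 0 ≤ g1 := div_nonneg (by linarith) (by linarith)
  have hq : b - 1 + g1 ≤ 0 := by
    have hd : (a - N * b) / (N + 1) ≤ 1 - b := by
      rw [div_le_iff₀ hN1pos]; nlinarith
    rw [hg1def]; linarith
  have hg2 : 0 < 1 - θ - g1 := by
    have : θ < 1 - g1 := hθ2
    linarith
  have habs1 : |a - N * b| = a - N * b := abs_of_nonneg (by linarith)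
  have habs2 : |a + θ - 1 - N * (b - θ + 1)| = (N + 1) * (1 - θ - g1) := by
    have he : a + θ - 1 - N * (b - θ + 1) = -((N + 1) * (1 - θ - g1)) := by
      rw [hg1def]; field_simp; ring
    rw [he, abs_neg, abs_of_nonneg (mul_nonneg (by linarith) hg2.le)]
  have hkey : a - N - g1 ≤ -(1 - θ - g1) := by
    have h2g1 : a - N + 1 - b ≤ 2 * g1 := by
      rw [hg1def, ← mul_div_assoc, le_div_iff₀ hN1pos]
      nlinarith [mul_le_mul_of_nonneg_left han.le (by linarith : (0:ℝ) ≤ N - 1),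
        mul_le_mul_of_nonneg_left hb1.le (by linarith : (0:ℝ) ≤ N - 1)]
    linarith
  -- rewrite exponents
  rw [show -(N - a) = a - N from by ring, show -(1 - b) = b - 1 from by ring,
    habs1, habs2, ← hg1def, mul_div_cancel_left₀ _ (ne_of_gt hN1pos)]
  have hst1 : s ^ (a - N) * t ^ (a - N) = w ^ (a - N) :=
    (Real.mul_rpow hs.le ht.le).symm
  have hst2 : s ^ (a + θ - 1 - N) * t ^ (a + θ - 1 - N) = w ^ (a + θ - 1 - N) :=
    (Real.mul_rpow hs.le ht.le).symm
  rcases le_total u w with hle | hle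
  · -- case u ≤ w : bound by first term
    have hsum : w / u + u / w ≤ 2 * (w / u) := by
      have : u / w ≤ w / u := by
        rw [div_le_div_iff₀ hw hu]; nlinarith
      linarith
    have h2wu : (2 * (w / u)) ^ (-g1) = 2 ^ (-g1) * w ^ (-g1) * u ^ g1 := by
      rw [Real.mul_rpow (by norm_num) (by positivity), Real.div_rpow hw.le hu.le,
        Real.rpow_neg hu.le g1, div_eq_mul_inv, inv_inv, mul_assoc]
    have main : (s ^ 2 + t ^ 2) ^ (a - N) * (s ^ 2 + t ^ 2 + u) ^ (b - 1) ≤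
        w ^ (a - N) * u ^ (b - 1) * (w / u + u / w) ^ (-g1) := by
      calc (s ^ 2 + t ^ 2) ^ (a - N) * (s ^ 2 + t ^ 2 + u) ^ (b - 1)
          ≤ (s ^ 2 + t ^ 2) ^ (a - N) * (s ^ 2 + t ^ 2) ^ (b - 1) := by
            refine mul_le_mul_of_nonneg_left ?_ (Real.rpow_nonneg hS.le _)
            exact Real.rpow_le_rpow_of_nonpos hS (by linarith) (by linarith)
        _ = (s ^ 2 + t ^ 2) ^ (a - N + (b - 1)) := (Real.rpow_add hS _ _).symm
        _ ≤ (2 * w) ^ (a - N + (b - 1)) :=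
            Real.rpow_le_rpow_of_nonpos (by positivity) h2w (by linarith)
        _ = 2 ^ (a - N + (b - 1)) * w ^ (a - N + (b - 1)) :=
            Real.mul_rpow (by norm_num) hw.le
        _ ≤ 2 ^ (-g1) * w ^ (a - N + (b - 1)) := by
            refine mul_le_mul_of_nonneg_right ?_ (Real.rpow_nonneg hw.le _)
            exact Real.rpow_le_rpow_of_exponent_le one_le_two (by linarith)
        _ = 2 ^ (-g1) * (w ^ (a - N - g1) * w ^ (b - 1 + g1)) := by
            rw [← Real.rpow_add hw]; ring_nf
        _ ≤ 2 ^ (-g1) * (w ^ (a - N - g1) * u ^ (b - 1 + g1)) := by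
            refine mul_le_mul_of_nonneg_left
              (mul_le_mul_of_nonneg_left ?_ (Real.rpow_nonneg hw.le _))
              (Real.rpow_nonneg (by norm_num) _)
            exact Real.rpow_le_rpow_of_nonpos hu hle hq
        _ = w ^ (a - N) * u ^ (b - 1) * (2 * (w / u)) ^ (-g1) := by
            rw [h2wu, show a - N - g1 = a - N + -g1 from by ring,
              show b - 1 + g1 = b - 1 + g1 from rfl,
              Real.rpow_add hw, Real.rpow_add hu]
            ring
        _ ≤ w ^ (a - N) * u ^ (b - 1) * (w / u + u / w) ^ (-g1) := by
            refine mul_le_mul_of_nonneg_left ?_ (by positivity)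
            exact Real.rpow_le_rpow_of_nonpos (by positivity) hsum (by linarith)
    rw [hst1, hst2]
    refine le_trans main (le_add_of_nonneg_right ?_)
    positivity
  · -- case w ≤ u : bound by second term
    have hSu : 0 < s ^ 2 + t ^ 2 + u := by positivity
    have hsum : w / u + u / w ≤ 2 * (u / w) := by
      have : w / u ≤ u / w := by
        rw [div_le_div_iff₀ hu hw]; nlinarith
      linarith
    have h2uw : (2 * (u / w)) ^ (-(1 - θ - g1)) =
        2 ^ (-(1 - θ - g1)) * u ^ (-(1 - θ - g1)) * w ^ (1 - θ - g1) := by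
      rw [Real.mul_rpow (by norm_num) (by positivity), Real.div_rpow hu.le hw.le,
        Real.rpow_neg hw.le (1 - θ - g1), div_eq_mul_inv, inv_inv, mul_assoc]
    have main : (s ^ 2 + t ^ 2) ^ (a - N) * (s ^ 2 + t ^ 2 + u) ^ (b - 1) ≤
        w ^ (a + θ - 1 - N) * u ^ (b - θ + 1 - 1) * (w / u + u / w) ^ (-(1 - θ - g1)) := by
      calc (s ^ 2 + t ^ 2) ^ (a - N) * (s ^ 2 + t ^ 2 + u) ^ (b - 1)
          = (s ^ 2 + t ^ 2) ^ (a - N) *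
              ((s ^ 2 + t ^ 2 + u) ^ (-g1) * (s ^ 2 + t ^ 2 + u) ^ (b - 1 + g1)) := by
            rw [← Real.rpow_add hSu]; ring_nf
        _ ≤ (2 * w) ^ (a - N) * ((2 * w) ^ (-g1) * u ^ (b - 1 + g1)) := by
            refine mul_le_mul ?_ (mul_le_mul ?_ ?_ (Real.rpow_nonneg hSu.le _)
              (Real.rpow_nonneg (by positivity) _)) (by positivity)
              (Real.rpow_nonneg (by positivity) _)
            · exact Real.rpow_le_rpow_of_nonpos (by positivity) h2w (by linarith)
            · exact Real.rpow_le_rpow_of_nonpos (by positivity) (by linarith) (by linarith)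
            · exact Real.rpow_le_rpow_of_nonpos hu (by linarith) hq
        _ = 2 ^ (a - N - g1) * (w ^ (a - N - g1) * u ^ (b - 1 + g1)) := by
            rw [Real.mul_rpow (by norm_num) hw.le, Real.mul_rpow (by norm_num) hw.le,
              show a - N - g1 = a - N + -g1 from by ring, Real.rpow_add hw,
              Real.rpow_add (by norm_num : (0:ℝ) < 2)]
            ring
        _ ≤ 2 ^ (-(1 - θ - g1)) * (w ^ (a - N - g1) * u ^ (b - 1 + g1)) := by
            refine mul_le_mul_of_nonneg_right ?_ (by positivity)
            exact Real.rpow_le_rpow_of_exponent_le one_le_two hkey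
        _ = w ^ (a + θ - 1 - N) * u ^ (b - θ + 1 - 1) * (2 * (u / w)) ^ (-(1 - θ - g1)) := by
            rw [h2uw, show a - N - g1 = a + θ - 1 - N + (1 - θ - g1) from by ring,
              show b - 1 + g1 = b - θ + 1 - 1 + -(1 - θ - g1) from by ring,
              Real.rpow_add hw, Real.rpow_add hu]
            ring
        _ ≤ w ^ (a + θ - 1 - N) * u ^ (b - θ + 1 - 1) * (w / u + u / w) ^ (-(1 - θ - g1)) := by
            refine mul_le_mul_of_nonneg_left ?_ (by positivity)
            exact Real.rpow_le_rpow_of_nonpos (by positivity) hsum (by linarith)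
    rw [hst1, hst2]
    refine le_trans main (le_add_of_nonneg_left ?_)
    positivity

theorem stmt7 (n : ℕ) (hn : 1 ≤ n) (a b θ : ℝ)
    (ha0 : 0 < a) (han : a < n) (hb0 : 0 < b) (hb1 : b < 1) (hab : n * b ≤ a)
    (hθ1 : b < θ) (hθ2 : θ < 1 - (a - n * b) / (n + 1))
    (ξ η : En n) (τ : ℝ) (hξ : ξ ≠ 0) (hη : η ≠ 0) (hτ : τ ≠ 0) :
    Omker n a b ξ η τ ≤
      Vker n a b ξ η τ + Vker n (a + θ - 1) (b - θ + 1) ξ η τ := by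
  have hs : 0 < ‖ξ‖ := norm_pos_iff.mpr hξ
  have ht : 0 < ‖η‖ := norm_pos_iff.mpr hη
  have hu : 0 < |τ| := abs_pos.mpr hτ
  have := core_ineq n hn a b θ ha0 han hb0 hb1 hab hθ1 hθ2 ‖ξ‖ ‖η‖ |τ| hs ht hu
  simpa [Omker, Vker] using this
end
end
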